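/- For the binary random walk B^{H,n}, the increments satisfy the variance bound E[(B^{H,n}_t − B^{H,n}_s)²] ≤ |⌊nt⌋/n − ⌊ns⌋/n|^{2H} for all s,t ∈ [0,1]. -/

import Mathlib

open MeasureTheory ProbabilityTheory intervalIntegral
open scoped ENNReal

/-- The distribution of a symmetric ±1 Bernoulli random variable. -/
noncomputable def bernPM : Measure ℝ :=
  (1 / 2 : ℝ≥0∞) • Measure.dirac 1 + (1 / 2 : ℝ≥0∞) • Measure.dirac (-1)

lemma stmt13_dirac_integrable (a : ℝ) (f : ℝ → ℝ) (hf : Measurable f) :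
    Integrable f (Measure.dirac a) :=
  ⟨hf.aestronglyMeasurable, by simp [HasFiniteIntegral, lintegral_dirac]⟩

lemma stmt13_bern_integral_id : ∫ x, x ∂bernPM = 0 := by
  rw [bernPM, integral_add_measure
    ((stmt13_dirac_integrable 1 (fun x => x) measurable_id).smul_measure (by norm_num))
    ((stmt13_dirac_integrable (-1) (fun x => x) measurable_id).smul_measure (by norm_num))]
  simp [MeasureTheory.integral_smul_measure, integral_dirac]

lemma stmt13_bern_ae {Ω : Type*} [MeasurableSpace Ω] (P : Measure Ω) (f : Ω → ℝ)
    (hf : Measurable f) (hd : Measure.map f P = bernPM) :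
    ∀ᵐ ω ∂P, f ω = 1 ∨ f ω = -1 := by
  have hms : MeasurableSet ({1, -1} : Set ℝ) := by measurability
  have h0 : P {ω | ¬(f ω = 1 ∨ f ω = -1)} = 0 := by
    have hpre : {ω | ¬(f ω = 1 ∨ f ω = -1)} = f ⁻¹' ({1, -1} : Set ℝ)ᶜ := by
      ext ω
      simp only [Set.mem_setOf_eq, Set.mem_preimage, Set.mem_compl_iff,
        Set.mem_insert_iff, Set.mem_singleton_iff]
    rw [hpre, ← Measure.map_apply (μ := P) hf hms.compl, hd]
    simp [bernPM, Measure.dirac_apply' _ hms.compl, Set.indicator]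
  exact ae_iff.2 h0

/-- Cauchy–Schwarz on an interval. -/
lemma stmt13_cs (f : ℝ → ℝ) {a b : ℝ} (hab : a ≤ b)
    (h1 : IntervalIntegrable f volume a b)
    (h2 : IntervalIntegrable (fun u => f u ^ 2) volume a b) :
    (∫ u in a..b, f u) ^ 2 ≤ (b - a) * ∫ u in a..b, f u ^ 2 := by
  rcases eq_or_lt_of_le hab with rfl | hlt
  · simp
  set I := ∫ u in a..b, f u with hI
  set J := ∫ u in a..b, f u ^ 2 with hJ
  set L := b - a with hL
  have hL0 : 0 < L := sub_pos.2 hlt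
  have key : (0:ℝ) ≤ ∫ u in a..b, (L * f u - I) ^ 2 :=
    intervalIntegral.integral_nonneg hab (fun u _ => sq_nonneg _)
  have expand : ∫ u in a..b, (L * f u - I) ^ 2
      = L ^ 2 * J - (2 * L * I) * I + I ^ 2 * L := by
    have heq : ∀ u, (L * f u - I) ^ 2 = L ^ 2 * f u ^ 2 - (2 * L * I) * f u + I ^ 2 :=
      fun u => by ring
    rw [intervalIntegral.integral_congr (g := fun u => L ^ 2 * f u ^ 2 - (2 * L * I) * f u + I ^ 2)
      (fun u _ => heq u)]
    rw [intervalIntegral.integral_add ((h2.const_mul _).sub (h1.const_mul _))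
      intervalIntegrable_const,
      intervalIntegral.integral_sub (h2.const_mul _) (h1.const_mul _),
      intervalIntegral.integral_const_mul, intervalIntegral.integral_const_mul,
      intervalIntegral.integral_const]
    rw [← hI, ← hJ, smul_eq_mul, ← hL]
    ring
  rw [expand] at key
  nlinarith

/-- For the disturbed binary random walk
`B^{H,n}_t = Σ_{i=1}^{⌊nt⌋} b^n_{t,i} ξ^n_i`, built from i.i.d. symmetric ±1 variables and
the Molchan–Golosov kernel `z` (whose `L²` products realize the fractional covariance),
the increments satisfy `E[(B^{H,n}_t − B^{H,n}_s)²] ≤ |⌊nt⌋/n − ⌊ns⌋/n|^{2H}`. -/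
theorem stmt13 {Ω : Type*} [MeasurableSpace Ω] (P : Measure Ω) [IsProbabilityMeasure P]
    (H : ℝ) (hH : H ∈ Set.Ioo (1 / 2 : ℝ) 1) (n : ℕ) (hn : 1 ≤ n)
    (ξ : ℕ → Ω → ℝ) (hmeas : ∀ i, Measurable (ξ i))
    (hindep : iIndepFun ξ P)
    (hdist : ∀ i, Measure.map (ξ i) P = bernPM)
    (z : ℝ → ℝ → ℝ) (hzm : ∀ a, Measurable (z a))
    (hzsq : ∀ a ∈ Set.Icc (0 : ℝ) 1, IntervalIntegrable (fun u => (z a u) ^ 2) volume 0 1)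
    (hzsupp : ∀ a u : ℝ, a < u → z a u = 0)
    (hzcov : ∀ a ∈ Set.Icc (0 : ℝ) 1, ∀ c ∈ Set.Icc (0 : ℝ) 1,
      ∫ u in (0 : ℝ)..1, z a u * z c u
        = (a ^ (2 * H) + c ^ (2 * H) - |a - c| ^ (2 * H)) / 2)
    (b : ℝ → ℕ → ℝ)
    (hb : ∀ (t : ℝ) (i : ℕ),
      b t i = Real.sqrt n * ∫ u in (((i : ℝ) - 1) / n)..((i : ℝ) / n),
        z ((⌊(n : ℝ) * t⌋₊ : ℝ) / n) u)
    (B : ℝ → Ω → ℝ)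
    (hB : ∀ (t : ℝ) (ω : Ω), B t ω = ∑ i ∈ Finset.Icc 1 ⌊(n : ℝ) * t⌋₊, b t i * ξ i ω)
    (s t : ℝ) (hs : s ∈ Set.Icc (0 : ℝ) 1) (ht : t ∈ Set.Icc (0 : ℝ) 1) :
    ∫ ω, (B t ω - B s ω) ^ 2 ∂P
      ≤ |(⌊(n : ℝ) * t⌋₊ : ℝ) / n - (⌊(n : ℝ) * s⌋₊ : ℝ) / n| ^ (2 * H) := by
  obtain ⟨hs0, hs1⟩ := hs
  obtain ⟨ht0, ht1⟩ := ht
  obtain ⟨hH1, hH2⟩ := hH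
  have hn0 : (0:ℝ) < n := by exact_mod_cast hn
  have hfl : ∀ r : ℝ, r ≤ 1 → ⌊(n:ℝ) * r⌋₊ ≤ n := by
    intro r hr
    calc ⌊(n:ℝ) * r⌋₊ ≤ ⌊(n:ℝ)⌋₊ := Nat.floor_mono (by nlinarith)
      _ = n := Nat.floor_natCast n
  set k := ⌊(n : ℝ) * t⌋₊ with hkdef
  set m := ⌊(n : ℝ) * s⌋₊ with hmdef
  have hk : k ≤ n := hfl t ht1
  have hm : m ≤ n := hfl s hs1
  set a := (k:ℝ)/n with hadef
  set c := (m:ℝ)/n with hcdef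
  have ha : a ∈ Set.Icc (0:ℝ) 1 :=
    ⟨div_nonneg (Nat.cast_nonneg k) hn0.le, by rw [hadef, div_le_one hn0]; exact_mod_cast hk⟩
  have hc : c ∈ Set.Icc (0:ℝ) 1 :=
    ⟨div_nonneg (Nat.cast_nonneg m) hn0.le, by rw [hcdef, div_le_one hn0]; exact_mod_cast hm⟩
  -- integrability of kernel slices
  have hIz : ∀ x ∈ Set.Icc (0:ℝ) 1, IntervalIntegrable (z x) volume 0 1 := by
    intro x hx
    have hsq := hzsq x hx
    rw [intervalIntegrable_iff_integrableOn_Ioc_of_le zero_le_one] at hsq ⊢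
    have hone : IntegrableOn (fun _ : ℝ => (1:ℝ)) (Set.Ioc (0:ℝ) 1) volume :=
      integrableOn_const (by simp [Real.volume_Ioc])
    have hg : IntegrableOn (fun u => (z x u)^2 + 1) (Set.Ioc (0:ℝ) 1) volume :=
      hsq.add hone
    refine hg.mono' (hzm x).aestronglyMeasurable ?_
    filter_upwards with u
    rw [Real.norm_eq_abs]
    nlinarith [sq_nonneg (|z x u| - 1), sq_abs (z x u)]
  have hmul : IntervalIntegrable (fun u => z a u * z c u) volume 0 1 := by
    have h1 := hzsq a ha
    have h2 := hzsq c hc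
    rw [intervalIntegrable_iff_integrableOn_Ioc_of_le zero_le_one] at h1 h2 ⊢
    have hg : IntegrableOn (fun u => (z a u)^2 + (z c u)^2) (Set.Ioc (0:ℝ) 1) volume :=
      h1.add h2
    refine hg.mono' ((hzm a).mul (hzm c)).aestronglyMeasurable ?_
    filter_upwards with u
    rw [Real.norm_eq_abs, abs_mul]
    nlinarith [sq_nonneg (|z a u| - |z c u|), sq_abs (z a u), sq_abs (z c u),
      abs_nonneg (z a u), abs_nonneg (z c u)]
  set w := fun u => z a u - z c u with hwdef
  have hw : IntervalIntegrable w volume 0 1 := (hIz a ha).sub (hIz c hc)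
  have hwsq : IntervalIntegrable (fun u => (w u)^2) volume 0 1 := by
    have heq : (fun u => (w u)^2)
        = fun u => ((z a u)^2 - 2*(z a u * z c u)) + (z c u)^2 := by
      funext u; simp only [hwdef]; ring
    rw [heq]
    exact ((hzsq a ha).sub (hmul.const_mul 2)).add (hzsq c hc)
  -- b vanishes beyond the floor
  have hbz : ∀ (r : ℝ) (i : ℕ), ⌊(n:ℝ)*r⌋₊ < i → b r i = 0 := by
    intro r i hi
    rw [hb]
    have hle : (⌊(n:ℝ)*r⌋₊ : ℝ)/n ≤ ((i:ℝ)-1)/n := by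
      have hcast : (⌊(n:ℝ)*r⌋₊ : ℝ) ≤ (i:ℝ) - 1 := by
        have : (⌊(n:ℝ)*r⌋₊ : ℝ) + 1 ≤ (i:ℝ) := by exact_mod_cast hi
        linarith
      gcongr
    have hord : ((i:ℝ)-1)/n ≤ (i:ℝ)/n := by gcongr <;> linarith
    have h0 : ∫ u in (((i:ℝ)-1)/n)..((i:ℝ)/n), z ((⌊(n:ℝ)*r⌋₊:ℝ)/n) u = 0 := by
      rw [intervalIntegral.integral_congr_ae (g := fun _ => (0:ℝ)) ?_]
      · simp
      · filter_upwards with u hu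
        rw [Set.uIoc_of_le hord] at hu
        exact hzsupp _ _ (lt_of_le_of_lt hle hu.1)
    rw [h0, mul_zero]
  -- B as a full sum over Icc 1 n
  have hBfull : ∀ (r : ℝ), r ≤ 1 → ∀ ω, B r ω = ∑ i ∈ Finset.Icc 1 n, b r i * ξ i ω := by
    intro r hr ω
    rw [hB]
    refine Finset.sum_subset (Finset.Icc_subset_Icc_right (hfl r hr)) ?_
    intro i hi hni
    simp only [Finset.mem_Icc] at hi hni
    have : ⌊(n:ℝ)*r⌋₊ < i := by omega
    rw [hbz r i this, zero_mul]
  set co : ℕ → ℝ := fun i => b t i - b s i with hcodef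
  have hdiff : ∀ ω, B t ω - B s ω = ∑ i ∈ Finset.Icc 1 n, co i * ξ i ω := by
    intro ω
    rw [hBfull t ht1 ω, hBfull s hs1 ω, ← Finset.sum_sub_distrib]
    exact Finset.sum_congr rfl fun i _ => by simp only [hcodef]; ring
  -- probabilistic facts
  have haepm : ∀ i, ∀ᵐ ω ∂P, ξ i ω = 1 ∨ ξ i ω = -1 :=
    fun i => stmt13_bern_ae P (ξ i) (hmeas i) (hdist i)
  have hbd : ∀ i, ∀ᵐ ω ∂P, ‖ξ i ω‖ ≤ 1 := by
    intro i; filter_upwards [haepm i] with ω h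
    rcases h with h | h <;> simp [h]
  have hint : ∀ i, Integrable (ξ i) P :=
    fun i => ⟨(hmeas i).aestronglyMeasurable, HasFiniteIntegral.of_bounded (hbd i)⟩
  have hintmul : ∀ i j, Integrable (fun ω => ξ i ω * ξ j ω) P := by
    intro i j
    refine ⟨((hmeas i).mul (hmeas j)).aestronglyMeasurable,
      HasFiniteIntegral.of_bounded (C := 1) ?_⟩
    filter_upwards [haepm i, haepm j] with ω h1 h2
    rcases h1 with h | h <;> rcases h2 with h' | h' <;> simp [h, h']
  have hmean : ∀ i, ∫ ω, ξ i ω ∂P = 0 := by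
    intro i
    have h1 : ∫ y, y ∂(Measure.map (ξ i) P) = ∫ ω, ξ i ω ∂P :=
      integral_map (hmeas i).aemeasurable aestronglyMeasurable_id
    rw [← h1, hdist i, stmt13_bern_integral_id]
  have hmomd : ∀ i, ∫ ω, ξ i ω * ξ i ω ∂P = 1 := by
    intro i
    have hae : ∀ᵐ ω ∂P, ξ i ω * ξ i ω = 1 := by
      filter_upwards [haepm i] with ω h
      rcases h with h | h <;> simp [h]
    rw [integral_congr_ae hae]
    simp
  have hmomo : ∀ i j, i ≠ j → ∫ ω, ξ i ω * ξ j ω ∂P = 0 := by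
    intro i j hij
    have hd := (hindep.indepFun hij).integral_mul_eq_mul_integral (hmeas i).aestronglyMeasurable
      (hmeas j).aestronglyMeasurable
    rw [show (fun ω => ξ i ω * ξ j ω) = ξ i * ξ j from rfl, hd, hmean, zero_mul]
  -- the second moment is the sum of squares of coefficients
  have hEq : ∫ ω, (B t ω - B s ω)^2 ∂P = ∑ i ∈ Finset.Icc 1 n, (co i)^2 := by
    have h1 : (fun ω => (B t ω - B s ω)^2)
        = fun ω => ∑ i ∈ Finset.Icc 1 n, ∑ j ∈ Finset.Icc 1 n,
            (co i * co j) * (ξ i ω * ξ j ω) := by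
      funext ω
      rw [hdiff ω, sq, Finset.sum_mul_sum]
      exact Finset.sum_congr rfl fun i _ => Finset.sum_congr rfl fun j _ => by ring
    rw [h1, integral_finset_sum _
      (fun i _ => integrable_finset_sum _ (fun j _ => (hintmul i j).const_mul _))]
    refine Finset.sum_congr rfl fun i hi => ?_
    rw [integral_finset_sum _ (fun j _ => (hintmul i j).const_mul _)]
    rw [Finset.sum_eq_single_of_mem i hi]
    · rw [MeasureTheory.integral_const_mul, hmomd, mul_one, sq]
    · intro j _ hji
      rw [MeasureTheory.integral_const_mul, hmomo i j (fun h => hji h.symm), mul_zero]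
  -- per-interval Cauchy–Schwarz
  have hco2 : ∀ i ∈ Finset.Icc 1 n,
      (co i)^2 ≤ ∫ u in (((i:ℝ)-1)/n)..((i:ℝ)/n), (w u)^2 := by
    intro i hi
    obtain ⟨hi1, hin⟩ := Finset.mem_Icc.1 hi
    have hi1' : (1:ℝ) ≤ (i:ℝ) := by exact_mod_cast hi1
    have hlo : (0:ℝ) ≤ ((i:ℝ)-1)/n := div_nonneg (by linarith) hn0.le
    have hhi : ((i:ℝ))/n ≤ 1 := by rw [div_le_one hn0]; exact_mod_cast hin
    have hord : ((i:ℝ)-1)/n ≤ (i:ℝ)/n := by gcongr <;> linarith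
    have hsubset : Set.uIcc (((i:ℝ)-1)/n) ((i:ℝ)/n) ⊆ Set.uIcc (0:ℝ) 1 := by
      rw [Set.uIcc_of_le hord, Set.uIcc_of_le zero_le_one]
      exact Set.Icc_subset_Icc hlo hhi
    have hwi := hw.mono_set hsubset
    have hwsqi := hwsq.mono_set hsubset
    have hcs := stmt13_cs w hord hwi hwsqi
    have hcoi : co i = Real.sqrt n * ∫ u in (((i:ℝ)-1)/n)..((i:ℝ)/n), w u := by
      simp only [hcodef]
      rw [hb t i, hb s i, ← hkdef, ← hmdef, ← hadef, ← hcdef, ← mul_sub]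
      congr 1
      rw [← intervalIntegral.integral_sub ((hIz a ha).mono_set hsubset)
        ((hIz c hc).mono_set hsubset)]
    rw [hcoi, mul_pow, Real.sq_sqrt (Nat.cast_nonneg n)]
    calc (n:ℝ) * (∫ u in (((i:ℝ)-1)/n)..((i:ℝ)/n), w u)^2
        ≤ (n:ℝ) * (((i:ℝ)/n - ((i:ℝ)-1)/n) * ∫ u in (((i:ℝ)-1)/n)..((i:ℝ)/n), (w u)^2) :=
          mul_le_mul_of_nonneg_left hcs (Nat.cast_nonneg n)
      _ = ∫ u in (((i:ℝ)-1)/n)..((i:ℝ)/n), (w u)^2 := by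
          have hlen : (i:ℝ)/n - ((i:ℝ)-1)/n = 1/n := by field_simp; ring
          rw [hlen]; field_simp
  -- sum of the interval integrals telescopes
  have hpart : ∑ i ∈ Finset.Icc 1 n, (∫ u in (((i:ℝ)-1)/n)..((i:ℝ)/n), (w u)^2)
      = ∫ u in (0:ℝ)..1, (w u)^2 := by
    have hadj : ∀ j, j < n → IntervalIntegrable (fun u => (w u)^2) volume
        ((j:ℝ)/n) (((j:ℝ)+1)/n) := by
      intro j hj
      apply hwsq.mono_set
      have hj0 : (0:ℝ) ≤ (j:ℝ)/n := div_nonneg (Nat.cast_nonneg j) hn0.le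
      have hj1 : ((j:ℝ)+1)/n ≤ 1 := by
        rw [div_le_one hn0]
        have : (j:ℝ) + 1 ≤ (n:ℝ) := by exact_mod_cast hj
        linarith
      have hordj : (j:ℝ)/n ≤ ((j:ℝ)+1)/n := by gcongr; linarith
      rw [Set.uIcc_of_le hordj, Set.uIcc_of_le zero_le_one]
      exact Set.Icc_subset_Icc hj0 hj1
    have hteles : ∑ j ∈ Finset.range n, ∫ u in (((j:ℕ):ℝ)/n)..((((j+1):ℕ):ℝ)/n), (w u)^2
        = ∫ u in (((0:ℕ):ℝ)/n)..(((n:ℕ):ℝ)/n), (w u)^2 :=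
      intervalIntegral.sum_integral_adjacent_intervals
        (by intro j hj; have := hadj j hj; push_cast; convert this using 2 <;> push_cast <;> ring)
    have hre : ∑ i ∈ Finset.Icc 1 n, (∫ u in (((i:ℝ)-1)/n)..((i:ℝ)/n), (w u)^2)
        = ∑ j ∈ Finset.range n, ∫ u in (((j:ℕ):ℝ)/n)..((((j+1):ℕ):ℝ)/n), (w u)^2 := by
      rw [← Finset.Ico_add_one_right_eq_Icc, Finset.sum_Ico_eq_sum_range]
      norm_num
      refine Finset.sum_congr rfl fun j _ => ?_
      congr 1 <;> push_cast <;> ring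
    rw [hre, hteles]
    have e3 : (((0:ℕ):ℝ))/n = 0 := by simp
    have e4 : (((n:ℕ):ℝ))/n = 1 := by field_simp
    rw [e3, e4]
  -- kernel covariance identity
  have hker : ∫ u in (0:ℝ)..1, (w u)^2 = |a - c| ^ (2*H) := by
    have hsqmul : ∀ x ∈ Set.Icc (0:ℝ) 1, ∫ u in (0:ℝ)..1, (z x u)^2
        = ∫ u in (0:ℝ)..1, z x u * z x u :=
      fun x _ => intervalIntegral.integral_congr (fun u _ => sq (z x u))
    have e1 : ∫ u in (0:ℝ)..1, (z a u)^2 = a ^ (2*H) := by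
      rw [hsqmul a ha, hzcov a ha a ha]
      rw [sub_self, abs_zero, Real.zero_rpow (by positivity)]
      ring
    have e2 : ∫ u in (0:ℝ)..1, (z c u)^2 = c ^ (2*H) := by
      rw [hsqmul c hc, hzcov c hc c hc]
      rw [sub_self, abs_zero, Real.zero_rpow (by positivity)]
      ring
    have e3 := hzcov a ha c hc
    have heq : (fun u => (w u)^2)
        = fun u => ((z a u)^2 - 2*(z a u * z c u)) + (z c u)^2 := by
      funext u; simp only [hwdef]; ring
    rw [heq, intervalIntegral.integral_add ((hzsq a ha).sub (hmul.const_mul 2)) (hzsq c hc),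
      intervalIntegral.integral_sub (hzsq a ha) (hmul.const_mul 2),
      intervalIntegral.integral_const_mul, e1, e2, e3]
    ring
  rw [hEq]
  calc ∑ i ∈ Finset.Icc 1 n, (co i)^2
      ≤ ∑ i ∈ Finset.Icc 1 n, ∫ u in (((i:ℝ)-1)/n)..((i:ℝ)/n), (w u)^2 :=
        Finset.sum_le_sum hco2
    _ = ∫ u in (0:ℝ)..1, (w u)^2 := hpart
    _ = |a - c| ^ (2*H) := hker
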